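/- Let G be a P_6-free chordal graph. Then every irredundant vertex of G is a simplicial vertex of the completion graph G_co, and the set IR(G) of irredundant vertices forms an independent set in G_co. -/

import Mathlib

set_option maxRecDepth 4000


open Set

variable {V : Type*}

/-- The closed neighbourhood `N_G[x]` of a vertex. -/
def closedNbhd (G : SimpleGraph V) (x : V) : Set V := insert x (G.neighborSet x)

/-- The closed neighbourhood `N_G[A]` of a set of vertices. -/
def closedNbhdSet (G : SimpleGraph V) (A : Set V) : Set V := ⋃ x ∈ A, closedNbhd G x

/-- `D` is a dominating set of `G`. -/
def Dominates (G : SimpleGraph V) (D : Set V) : Prop := ∀ v, v ∈ closedNbhdSet G D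

/-- `IR` is a valid set of irredundant vertices of `G`: every member has an
inclusion-minimal closed neighbourhood, exactly one representative is kept per class of
vertices with equal closed neighbourhoods, and every vertex with a minimal closed
neighbourhood has a representative in `IR`. The remaining (redundant) vertices form
`IRᶜ = RN(G)`. -/
def IsIrrSet (G : SimpleGraph V) (IR : Set V) : Prop :=
  (∀ x ∈ IR, ∀ y : V, closedNbhd G y ⊆ closedNbhd G x → closedNbhd G y = closedNbhd G x) ∧
  (∀ x ∈ IR, ∀ y ∈ IR, closedNbhd G x = closedNbhd G y → x = y) ∧
  (∀ x : V, (∀ y : V, closedNbhd G y ⊆ closedNbhd G x → closedNbhd G y = closedNbhd G x) →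
    ∃ z ∈ IR, closedNbhd G z = closedNbhd G x)

/-- The completion `G_co` of `G` (w.r.t. the irredundant set `IR`): all edges between
distinct redundant vertices are added. -/
def completion (G : SimpleGraph V) (IR : Set V) : SimpleGraph V where
  Adj x y := G.Adj x y ∨ (x ≠ y ∧ x ∉ IR ∧ y ∉ IR)
  symm := by
    refine ⟨?_⟩
    intro x y h
    rcases h with h | ⟨hne, hx, hy⟩
    · exact Or.inl h.symm
    · exact Or.inr ⟨hne.symm, hy, hx⟩
  loopless := by
    refine ⟨?_⟩
    intro x h
    rcases h with h | ⟨hne, _, _⟩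
    · exact G.ne_of_adj h rfl
    · exact hne rfl

/-- A graph is chordal if it has no induced cycle of length at least 4. -/
def Chordal (G : SimpleGraph V) : Prop :=
  ∀ n : ℕ, 4 ≤ n → IsEmpty (SimpleGraph.cycleGraph n ↪g G)

/-- A graph is `P₆`-free if it has no induced path on 6 vertices. -/
def P6Free (G : SimpleGraph V) : Prop := IsEmpty (SimpleGraph.pathGraph 6 ↪g G)

/-- A graph is a split graph if its vertex set partitions into a clique and an
independent set. -/
def IsSplit (G : SimpleGraph V) : Prop :=
  ∃ C S : Set V, C ∪ S = Set.univ ∧ C ∩ S = ∅ ∧ G.IsClique C ∧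
    S.Pairwise fun a b => ¬ G.Adj a b

@[simp] lemma vec6_five {α : Type*} (a b c d e f : α) : ![a,b,c,d,e,f] 5 = f := rfl
@[simp] lemma vec6_four {α : Type*} (a b c d e f : α) : ![a,b,c,d,e,f] 4 = e := rfl

lemma mem_closedNbhd {G : SimpleGraph V} {x y : V} :
    y ∈ closedNbhd G x ↔ y = x ∨ G.Adj x y := by
  simp [closedNbhd, SimpleGraph.mem_neighborSet]

lemma noC4 (G : SimpleGraph V) (hch : Chordal G) {a b c d : V}
    (hab : G.Adj a b) (hbc : G.Adj b c) (hcd : G.Adj c d) (hda : G.Adj d a)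
    (hac : ¬ G.Adj a c) (hbd : ¬ G.Adj b d) (hac' : a ≠ c) (hbd' : b ≠ d) : False := by
  have h1 := hab.ne; have h2 := hbc.ne; have h3 := hcd.ne; have h4 := hda.ne.symm
  have s1 := hab.symm; have s2 := hbc.symm; have s3 := hcd.symm; have s4 := hda.symm
  have n1 : ¬ G.Adj c a := fun h => hac h.symm
  have n2 : ¬ G.Adj d b := fun h => hbd h.symm
  refine (hch 4 (by norm_num)).elim ⟨⟨![a,b,c,d], ?_⟩, ?_⟩
  · intro i j h
    fin_cases i <;> fin_cases j <;> simp_all [Matrix.cons_val_succ]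
  · intro i j; change G.Adj (![a,b,c,d] i) (![a,b,c,d] j) ↔ _
    fin_cases i <;> fin_cases j <;>
      simp_all (config := { decide := true }) [SimpleGraph.cycleGraph_adj, Matrix.cons_val_succ]

lemma noC5 (G : SimpleGraph V) (hch : Chordal G) {a b c d e : V}
    (hab : G.Adj a b) (hbc : G.Adj b c) (hcd : G.Adj c d) (hde : G.Adj d e)
    (hea : G.Adj e a)
    (hac : ¬ G.Adj a c) (had : ¬ G.Adj a d) (hbd : ¬ G.Adj b d) (hbe : ¬ G.Adj b e)
    (hce : ¬ G.Adj c e)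
    (hac' : a ≠ c) (had' : a ≠ d) (hbd' : b ≠ d) (hbe' : b ≠ e) (hce' : c ≠ e) :
    False := by
  have h1 := hab.ne; have h2 := hbc.ne; have h3 := hcd.ne; have h4 := hde.ne
  have h5 := hea.ne.symm
  have s1 := hab.symm; have s2 := hbc.symm; have s3 := hcd.symm; have s4 := hde.symm
  have s5 := hea.symm
  have n1 : ¬ G.Adj c a := fun h => hac h.symm
  have n2 : ¬ G.Adj d a := fun h => had h.symm
  have n3 : ¬ G.Adj d b := fun h => hbd h.symm
  have n4 : ¬ G.Adj e b := fun h => hbe h.symm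
  have n5 : ¬ G.Adj e c := fun h => hce h.symm
  refine (hch 5 (by norm_num)).elim ⟨⟨![a,b,c,d,e], ?_⟩, ?_⟩
  · intro i j h
    fin_cases i <;> fin_cases j <;> simp_all [Matrix.cons_val_succ]
  · intro i j; change G.Adj (![a,b,c,d,e] i) (![a,b,c,d,e] j) ↔ _
    fin_cases i <;> fin_cases j <;>
      simp_all (config := { decide := true }) [SimpleGraph.cycleGraph_adj, Matrix.cons_val_succ]

lemma noC6 (G : SimpleGraph V) (hch : Chordal G) {a b c d e f : V}
    (hab : G.Adj a b) (hbc : G.Adj b c) (hcd : G.Adj c d) (hde : G.Adj d e)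
    (hef : G.Adj e f) (hfa : G.Adj f a)
    (hac : ¬ G.Adj a c) (had : ¬ G.Adj a d) (hae : ¬ G.Adj a e)
    (hbd : ¬ G.Adj b d) (hbe : ¬ G.Adj b e) (hbf : ¬ G.Adj b f)
    (hce : ¬ G.Adj c e) (hcf : ¬ G.Adj c f) (hdf : ¬ G.Adj d f)
    (hac' : a ≠ c) (had' : a ≠ d) (hae' : a ≠ e) (hbd' : b ≠ d) (hbe' : b ≠ e)
    (hbf' : b ≠ f) (hce' : c ≠ e) (hcf' : c ≠ f) (hdf' : d ≠ f) : False := by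
  have h1 := hab.ne; have h2 := hbc.ne; have h3 := hcd.ne; have h4 := hde.ne
  have h5 := hef.ne; have h6 := hfa.ne.symm
  have s1 := hab.symm; have s2 := hbc.symm; have s3 := hcd.symm; have s4 := hde.symm
  have s5 := hef.symm; have s6 := hfa.symm
  have n1 : ¬ G.Adj c a := fun h => hac h.symm
  have n2 : ¬ G.Adj d a := fun h => had h.symm
  have n3 : ¬ G.Adj e a := fun h => hae h.symm
  have n4 : ¬ G.Adj d b := fun h => hbd h.symm
  have n5 : ¬ G.Adj e b := fun h => hbe h.symm
  have n6 : ¬ G.Adj f b := fun h => hbf h.symm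
  have n7 : ¬ G.Adj e c := fun h => hce h.symm
  have n8 : ¬ G.Adj f c := fun h => hcf h.symm
  have n9 : ¬ G.Adj f d := fun h => hdf h.symm
  refine (hch 6 (by norm_num)).elim ⟨⟨![a,b,c,d,e,f], ?_⟩, ?_⟩
  · intro i j h
    fin_cases i <;> fin_cases j <;> simp_all [Matrix.cons_val_succ]
  · intro i j; change G.Adj (![a,b,c,d,e,f] i) (![a,b,c,d,e,f] j) ↔ _
    fin_cases i <;> fin_cases j <;>
      simp_all (config := { decide := true }) [SimpleGraph.cycleGraph_adj, Matrix.cons_val_succ]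

lemma noP6 (G : SimpleGraph V) (hp6 : P6Free G) {a b c d e f : V}
    (hab : G.Adj a b) (hbc : G.Adj b c) (hcd : G.Adj c d) (hde : G.Adj d e)
    (hef : G.Adj e f)
    (hac : ¬ G.Adj a c) (had : ¬ G.Adj a d) (hae : ¬ G.Adj a e) (haf : ¬ G.Adj a f)
    (hbd : ¬ G.Adj b d) (hbe : ¬ G.Adj b e) (hbf : ¬ G.Adj b f)
    (hce : ¬ G.Adj c e) (hcf : ¬ G.Adj c f) (hdf : ¬ G.Adj d f)
    (hac' : a ≠ c) (had' : a ≠ d) (hae' : a ≠ e) (haf' : a ≠ f)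
    (hbd' : b ≠ d) (hbe' : b ≠ e) (hbf' : b ≠ f)
    (hce' : c ≠ e) (hcf' : c ≠ f) (hdf' : d ≠ f) : False := by
  have h1 := hab.ne; have h2 := hbc.ne; have h3 := hcd.ne; have h4 := hde.ne
  have h5 := hef.ne
  have s1 := hab.symm; have s2 := hbc.symm; have s3 := hcd.symm; have s4 := hde.symm
  have s5 := hef.symm
  have n1 : ¬ G.Adj c a := fun h => hac h.symm
  have n2 : ¬ G.Adj d a := fun h => had h.symm
  have n3 : ¬ G.Adj e a := fun h => hae h.symm
  have n4 : ¬ G.Adj f a := fun h => haf h.symm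
  have n5 : ¬ G.Adj d b := fun h => hbd h.symm
  have n6 : ¬ G.Adj e b := fun h => hbe h.symm
  have n7 : ¬ G.Adj f b := fun h => hbf h.symm
  have n8 : ¬ G.Adj e c := fun h => hce h.symm
  have n9 : ¬ G.Adj f c := fun h => hcf h.symm
  have n10 : ¬ G.Adj f d := fun h => hdf h.symm
  refine hp6.elim ⟨⟨![a,b,c,d,e,f], ?_⟩, ?_⟩
  · intro i j h
    fin_cases i <;> fin_cases j <;> simp_all [Matrix.cons_val_succ]
  · intro i j; change G.Adj (![a,b,c,d,e,f] i) (![a,b,c,d,e,f] j) ↔ _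
    fin_cases i <;> fin_cases j <;>
      simp_all (config := { decide := true }) [SimpleGraph.pathGraph_adj, Matrix.cons_val_succ]


lemma key_lemma (G : SimpleGraph V) (hch : Chordal G) (hp6 : P6Free G) {a b : V}
    (hab : G.Adj a b)
    (ha : ∀ y, closedNbhd G y ⊆ closedNbhd G a → closedNbhd G y = closedNbhd G a)
    (hb : ∀ y, closedNbhd G y ⊆ closedNbhd G b → closedNbhd G y = closedNbhd G b)
    (hne : closedNbhd G a ≠ closedNbhd G b) : False := by
  have haNb : a ∈ closedNbhd G b := mem_closedNbhd.2 (Or.inr hab.symm)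
  have hbNa : b ∈ closedNbhd G a := mem_closedNbhd.2 (Or.inr hab)
  have hnsub1 : ¬ closedNbhd G a ⊆ closedNbhd G b := fun h => hne (hb _ h)
  obtain ⟨c, hcA, hcB⟩ := Set.not_subset.1 hnsub1
  have hnsub2 : ¬ closedNbhd G b ⊆ closedNbhd G a := fun h => hne (ha _ h).symm
  obtain ⟨d, hdB, hdA⟩ := Set.not_subset.1 hnsub2
  have hca : c ≠ a := fun h => hcB (h ▸ haNb)
  have hac : G.Adj a c := (mem_closedNbhd.1 hcA).resolve_left hca
  have hcb : c ≠ b := fun h => hcB (mem_closedNbhd.2 (Or.inl h))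
  have hbc : ¬ G.Adj b c := fun h => hcB (mem_closedNbhd.2 (Or.inr h))
  have hdb : d ≠ b := fun h => hdA (h ▸ hbNa)
  have hbd : G.Adj b d := (mem_closedNbhd.1 hdB).resolve_left hdb
  have hda : d ≠ a := fun h => hdA (mem_closedNbhd.2 (Or.inl h))
  have had : ¬ G.Adj a d := fun h => hdA (mem_closedNbhd.2 (Or.inr h))
  have hcd : c ≠ d := fun h => hdA (h ▸ hcA)
  have hcdA : ¬ G.Adj c d := fun h =>
    noC4 G hch hab hbd h.symm hac.symm had hbc hda.symm hcb.symm
  have hsubc : ¬ closedNbhd G c ⊆ closedNbhd G a := by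
    intro h
    have h2 := ha c h
    have h3 : b ∈ closedNbhd G c := h2 ▸ hbNa
    rcases mem_closedNbhd.1 h3 with h4 | h4
    · exact hcb h4.symm
    · exact hbc h4.symm
  obtain ⟨e, heC, heA⟩ := Set.not_subset.1 hsubc
  have hec : e ≠ c := fun h => heA (h ▸ hcA)
  have hce : G.Adj c e := (mem_closedNbhd.1 heC).resolve_left hec
  have hea : e ≠ a := fun h => heA (mem_closedNbhd.2 (Or.inl h))
  have hae : ¬ G.Adj a e := fun h => heA (mem_closedNbhd.2 (Or.inr h))
  have heb : e ≠ b := fun h => heA (h ▸ hbNa)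
  have hed : e ≠ d := fun h => hcdA (h ▸ hce)
  have hbe : ¬ G.Adj b e := fun h =>
    noC4 G hch hab h hce.symm hac.symm hae hbc hea.symm hcb.symm
  have hde : ¬ G.Adj d e := fun h =>
    noC5 G hch hab hbd h hce.symm hac.symm had hae hbe hbc
      (fun h' => hcdA h'.symm) hda.symm hea.symm heb.symm hcb.symm hcd.symm
  have hsubd : ¬ closedNbhd G d ⊆ closedNbhd G b := by
    intro h
    have h2 := hb d h
    have h3 : a ∈ closedNbhd G d := h2 ▸ haNb
    rcases mem_closedNbhd.1 h3 with h4 | h4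
    · exact hda h4.symm
    · exact had h4.symm
  obtain ⟨f, hfD, hfB⟩ := Set.not_subset.1 hsubd
  have hfd : f ≠ d := fun h => hfB (h ▸ hdB)
  have hdf : G.Adj d f := (mem_closedNbhd.1 hfD).resolve_left hfd
  have hfb : f ≠ b := fun h => hfB (mem_closedNbhd.2 (Or.inl h))
  have hbf : ¬ G.Adj b f := fun h => hfB (mem_closedNbhd.2 (Or.inr h))
  have hfa : f ≠ a := fun h => hfB (h ▸ haNb)
  have hfc : f ≠ c := fun h => hcdA (h ▸ hdf).symm
  have hfe : f ≠ e := fun h => hde (h ▸ hdf)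
  have haf : ¬ G.Adj a f := fun h =>
    noC4 G hch hab hbd hdf h.symm had hbf hda.symm hfb.symm
  have hcf : ¬ G.Adj c f := fun h =>
    noC5 G hch hab.symm hac h hdf.symm hbd.symm hbc hbf haf had hcdA
      hcb.symm hfb.symm hfa.symm hda.symm hcd
  by_cases hef : G.Adj e f
  · exact noC6 G hch hab hbd hdf hef.symm hce.symm hac.symm had haf hae hbf hbe hbc
      hde (fun h' => hcdA h'.symm) (fun h' => hcf h'.symm)
      hda.symm hfa.symm hea.symm hfb.symm heb.symm hcb.symm hed.symm hcd.symm hfc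
  · exact noP6 G hp6 hce.symm hac.symm hab hbd hdf
      (fun h => hae h.symm) (fun h => hbe h.symm) (fun h => hde h.symm) hef
      (fun h => hbc h.symm) hcdA hcf had haf hbf
      hea heb hed hfe.symm hcb hcd hfc.symm hda.symm hfa.symm hfb.symm

/-- In a `P₆`-free chordal graph `G`, every irredundant vertex is simplicial in the
completion `G_co`, and the irredundant vertices form an independent set in `G_co`. -/
theorem stmt_15 [Fintype V] (G : SimpleGraph V) (hch : Chordal G) (hp6 : P6Free G)
    (IR : Set V) (hIR : IsIrrSet G IR) :
    (∀ x ∈ IR, (completion G IR).IsClique ((completion G IR).neighborSet x)) ∧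
    (IR.Pairwise fun a b => ¬ (completion G IR).Adj a b) := by
  have indep : ∀ a ∈ IR, ∀ b ∈ IR, a ≠ b → ¬ G.Adj a b := by
    intro a haI b hbI hne hadj
    exact key_lemma G hch hp6 hadj (hIR.1 a haI) (hIR.1 b hbI)
      (fun h => hne (hIR.2.1 a haI b hbI h))
  constructor
  · intro x hx u hu v hv huv
    have hu' : G.Adj x u := by
      rcases hu with h | ⟨_, hx2, _⟩
      · exact h
      · exact absurd hx hx2
    have hv' : G.Adj x v := by
      rcases hv with h | ⟨_, hx2, _⟩
      · exact h
      · exact absurd hx hx2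
    have hun : u ∉ IR := fun h => indep x hx u h hu'.ne hu'
    have hvn : v ∉ IR := fun h => indep x hx v h hv'.ne hv'
    exact Or.inr ⟨huv, hun, hvn⟩
  · intro a haI b hbI hne hadj
    rcases hadj with h | ⟨_, ha2, _⟩
    · exact indep a haI b hbI hne h
    · exact ha2 haI
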